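/- arXiv:1910.09647 — 2 statements merged into one kernel-verified Lean document; each statement's English description precedes it below -/
import Mathlib

section
/- For an n×n positive semidefinite Hermitian matrix M and real c > 0, log det(I + c·M) ≥ n · log(1 + c · det(M)^{1/n}). -/
open Matrix ComplexOrder Finset

lemma key_pow (n : ℕ) (hn : 0 < n) (a : Fin n → ℝ) (ha : ∀ i, 0 ≤ a i)
    (c : ℝ) (hc : 0 < c) :
    (1 + c * (∏ i, a i) ^ ((1 : ℝ) / n)) ^ n ≤ ∏ i, (1 + c * a i) := by
  have hnR : (0:ℝ) < n := by exact_mod_cast hn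
  have hpos : ∀ i, (0:ℝ) < 1 + c * a i := fun i => by nlinarith [ha i]
  have hPnn : (0:ℝ) ≤ ∏ i, a i := Finset.prod_nonneg fun i _ => ha i
  set Q : ℝ := ∏ i, (1 + c * a i) with hQ
  have hQpos : 0 < Q := Finset.prod_pos fun i _ => hpos i
  set G : ℝ := (∏ i, a i) ^ ((1:ℝ)/n) with hG
  have hGnn : 0 ≤ G := Real.rpow_nonneg hPnn _
  set R : ℝ := Q ^ ((1:ℝ)/n) with hR
  have hRpos : 0 < R := Real.rpow_pos_of_pos hQpos _
  have hwsum : ∑ _i : Fin n, (1:ℝ)/n = 1 := by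
    rw [Finset.sum_const, Finset.card_univ, Fintype.card_fin, nsmul_eq_mul]
    field_simp
  have h1 : ∏ i, (1 / (1 + c * a i)) ^ ((1:ℝ)/n) ≤ ∑ i, (1/(n:ℝ)) * (1 / (1 + c * a i)) :=
    Real.geom_mean_le_arith_mean_weighted Finset.univ _ _
      (fun i _ => by positivity) hwsum
      (fun i _ => div_nonneg zero_le_one (hpos i).le)
  have h2 : ∏ i, (c * a i / (1 + c * a i)) ^ ((1:ℝ)/n)
      ≤ ∑ i, (1/(n:ℝ)) * (c * a i / (1 + c * a i)) :=
    Real.geom_mean_le_arith_mean_weighted Finset.univ _ _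
      (fun i _ => by positivity) hwsum
      (fun i _ => div_nonneg (mul_nonneg hc.le (ha i)) (hpos i).le)
  have hsum : (∑ i, (1/(n:ℝ)) * (1 / (1 + c * a i)))
      + ∑ i, (1/(n:ℝ)) * (c * a i / (1 + c * a i)) = 1 := by
    rw [← Finset.sum_add_distrib]
    have h : ∀ i : Fin n,
        (1/(n:ℝ)) * (1 / (1 + c * a i)) + (1/(n:ℝ)) * (c * a i / (1 + c * a i)) = 1/(n:ℝ) := by
      intro i
      have hne := (hpos i).ne'
      field_simp
    calc ∑ i : Fin n, ((1/(n:ℝ)) * (1 / (1 + c * a i)) + (1/(n:ℝ)) * (c * a i / (1 + c * a i)))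
        = ∑ _i : Fin n, (1:ℝ)/n := Finset.sum_congr rfl fun i _ => h i
      _ = 1 := hwsum
  have e1 : ∏ i, (1 / (1 + c * a i)) ^ ((1:ℝ)/n) = R⁻¹ := by
    rw [Real.finset_prod_rpow _ _ (fun i _ => div_nonneg zero_le_one (hpos i).le)]
    rw [Finset.prod_div_distrib, Finset.prod_const_one, hR, ← hQ, one_div,
      Real.inv_rpow hQpos.le]
  have e2 : ∏ i, (c * a i / (1 + c * a i)) ^ ((1:ℝ)/n) = c * G / R := by
    rw [Real.finset_prod_rpow _ _
      (fun i _ => div_nonneg (mul_nonneg hc.le (ha i)) (hpos i).le)]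
    rw [Finset.prod_div_distrib, Finset.prod_mul_distrib, Finset.prod_const,
      Finset.card_univ, Fintype.card_fin, ← hQ]
    rw [Real.div_rpow (by positivity) hQpos.le,
      Real.mul_rpow (by positivity) hPnn]
    rw [← Real.rpow_natCast c n, ← Real.rpow_mul hc.le,
      mul_one_div, div_self hnR.ne', Real.rpow_one]
  have hcomb : R⁻¹ + c * G / R ≤ 1 := by
    have h := add_le_add h1 h2
    rw [e1, e2, hsum] at h
    exact h
  have hle : 1 + c * G ≤ R := by
    have h' : (1 + c * G) / R ≤ 1 := by
      rw [add_div, div_eq_mul_inv 1 R, one_mul]; exact hcomb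
    exact (div_le_one hRpos).mp h'
  calc (1 + c * G) ^ n ≤ R ^ n := pow_le_pow_left₀ (by positivity) hle n
    _ = Q := by
        rw [hR, ← Real.rpow_natCast (Q ^ ((1:ℝ)/n)) n, ← Real.rpow_mul hQpos.le,
          one_div, inv_mul_cancel₀ hnR.ne', Real.rpow_one]

theorem log_det_one_add_smul_ge (n : ℕ) (hn : 0 < n)
    (M : Matrix (Fin n) (Fin n) ℂ) (hM : M.PosSemidef) (c : ℝ) (hc : 0 < c) :
    (n : ℝ) * Real.log (1 + c * (M.det.re) ^ ((1 : ℝ) / n)) ≤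
      Real.log ((1 + (c : ℂ) • M).det.re) := by
  have hH := hM.1
  set lam := hH.eigenvalues with hlam
  have hlnn : ∀ i, 0 ≤ lam i := fun i => hM.eigenvalues_nonneg i
  set U : Matrix (Fin n) (Fin n) ℂ := (hH.eigenvectorUnitary : Matrix (Fin n) (Fin n) ℂ)
    with hU
  have hdetM : M.det.re = ∏ i, lam i := by
    rw [hH.det_eq_prod_eigenvalues, ← hlam]
    norm_cast
  have hdet1 : ((1 + (c:ℂ) • M).det).re = ∏ i, (1 + c * lam i) := by
    have hUU : U * star U = 1 := (Matrix.mem_unitaryGroup_iff).mp (hH.eigenvectorUnitary).2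
    have hUU' : star U * U = 1 := (Matrix.mem_unitaryGroup_iff').mp (hH.eigenvectorUnitary).2
    have key : (1 : Matrix (Fin n) (Fin n) ℂ) + (c:ℂ) • M
        = U * (Matrix.diagonal fun i => 1 + (c:ℂ) * lam i) * star U := by
      conv_lhs => rw [hH.spectral_theorem, Unitary.conjStarAlgAut_apply]
      have hd : (Matrix.diagonal fun i => 1 + (c:ℂ) * lam i)
          = 1 + (c:ℂ) • Matrix.diagonal (RCLike.ofReal ∘ lam) := by
        ext i j
        by_cases h : i = j
        · subst h
          simp [Matrix.one_apply, smul_eq_mul]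
        · simp [Matrix.diagonal_apply_ne _ h, Matrix.one_apply_ne h]
      rw [hd, Matrix.mul_add, Matrix.add_mul, Matrix.mul_one, ← hU, hUU,
        Matrix.mul_smul, Matrix.smul_mul]
    rw [key, Matrix.det_mul_right_comm, hUU, Matrix.one_mul, Matrix.det_diagonal]
    have hcast : ∀ i : Fin n, (1 + (c:ℂ) * lam i) = ((1 + c * lam i : ℝ) : ℂ) := by
      intro i; push_cast; ring
    rw [Finset.prod_congr rfl fun i _ => hcast i, ← Complex.ofReal_prod]
    exact Complex.ofReal_re _
  rw [hdetM, hdet1]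
  have hGnn : 0 ≤ (∏ i, lam i) ^ ((1:ℝ)/n) :=
    Real.rpow_nonneg (Finset.prod_nonneg fun i _ => hlnn i) _
  have hkey := key_pow n hn lam hlnn c hc
  calc (n:ℝ) * Real.log (1 + c * (∏ i, lam i) ^ ((1:ℝ)/n))
      = Real.log ((1 + c * (∏ i, lam i) ^ ((1:ℝ)/n)) ^ n) := by rw [Real.log_pow]
    _ ≤ Real.log (∏ i, (1 + c * lam i)) :=
        Real.log_le_log (by positivity) hkey
end

section
/- More generally: if Θ is an n×n Hermitian PSD matrix with Θ ⪰ c·I for some c ≥ 0, and S ∈ ℂ^{K×n}, then det(S Θ S^H) ≥ c^K · det(S S^H). -/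
open Matrix ComplexOrder

private lemma psd_det_real {K : ℕ} {M : Matrix (Fin K) (Fin K) ℂ} (hM : M.PosSemidef) :
    ∃ r : ℝ, 0 ≤ r ∧ M.det = (r : ℂ) := by
  refine ⟨∏ i, hM.1.eigenvalues i, Finset.prod_nonneg fun i _ => hM.eigenvalues_nonneg i, ?_⟩
  rw [hM.1.det_eq_prod_eigenvalues]
  push_cast
  rfl

private lemma det_one_add_psd {K : ℕ} {P : Matrix (Fin K) (Fin K) ℂ} (hP : P.PosSemidef) :
    ∃ r : ℝ, 1 ≤ r ∧ (1 + P).det = (r : ℂ) := by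
  have hM : (1 + P).PosSemidef := Matrix.PosSemidef.one.add hP
  refine ⟨∏ i, hM.1.eigenvalues i, ?_, ?_⟩
  · have hev : ∀ i, 1 ≤ hM.1.eigenvalues i := by
      intro i
      have hv := hM.1.eigenvalues_eq i
      set v := ⇑(hM.1.eigenvectorBasis i) with hvdef
      have hnorm : ‖hM.1.eigenvectorBasis i‖ = 1 := hM.1.eigenvectorBasis.orthonormal.1 i
      have h1 : RCLike.re (dotProduct (star v) ((1 : Matrix (Fin K) (Fin K) ℂ) *ᵥ v)) = (1 : ℝ) := by
        rw [one_mulVec]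
        have : dotProduct (star v) v =
            inner ℂ (hM.1.eigenvectorBasis i) (hM.1.eigenvectorBasis i) := by
          rw [EuclideanSpace.inner_eq_star_dotProduct, dotProduct_comm]
        rw [this, inner_self_eq_norm_sq_to_K, hnorm]
        norm_num
      have h2 : 0 ≤ RCLike.re (dotProduct (star v) (P *ᵥ v)) := hP.re_dotProduct_nonneg v
      rw [hv, add_mulVec, dotProduct_add, map_add, h1]
      linarith
    calc (1 : ℝ) = ∏ _i : Fin K, (1 : ℝ) := by simp
      _ ≤ ∏ i, hM.1.eigenvalues i :=
          Finset.prod_le_prod (fun _ _ => zero_le_one) (fun i _ => hev i)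
  · rw [hM.1.det_eq_prod_eigenvalues]
    push_cast
    rfl

private lemma det_mono {K : ℕ} {A B : Matrix (Fin K) (Fin K) ℂ} (hA : A.PosSemidef)
    (hBA : (B - A).PosSemidef) : A.det.re ≤ B.det.re := by
  have hB : B.PosSemidef := by simpa using hA.add hBA
  obtain ⟨a, ha0, hadet⟩ := psd_det_real hA
  obtain ⟨b, hb0, hbdet⟩ := psd_det_real hB
  rw [hadet, hbdet, Complex.ofReal_re, Complex.ofReal_re]
  by_cases hdet : a = 0
  · simpa [hdet] using hb0
  · -- A is invertible; use its PSD square root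
    have haunit : IsUnit A.det := by
      rw [hadet]; exact (Ne.isUnit (by exact_mod_cast hdet))
    open MatrixOrder in
    set R := CFC.sqrt A with hRdef
    open MatrixOrder in
    have hRpsd : R.PosSemidef := (CFC.sqrt_nonneg A).posSemidef
    open MatrixOrder in
    have hRR : R * R = A := CFC.sqrt_mul_sqrt_self A hA.nonneg
    have hRunit : IsUnit R.det := by
      have : R.det * R.det = A.det := by rw [← det_mul, hRR]
      exact isUnit_of_mul_isUnit_left (this ▸ haunit)
    have hRherm : R.IsHermitian := hRpsd.1
    have hRinvherm : R⁻¹.IsHermitian := hRherm.inv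
    set P := R⁻¹ * (B - A) * R⁻¹ with hPdef
    have hPpsd : P.PosSemidef := by
      have := hBA.mul_mul_conjTranspose_same R⁻¹
      rwa [hRinvherm.eq] at this
    have hmid : R * (R⁻¹ * (B - A) * R⁻¹) * R = B - A := by
      rw [Matrix.mul_assoc R⁻¹ (B - A) R⁻¹, Matrix.mul_nonsing_inv_cancel_left _ _ hRunit,
        Matrix.nonsing_inv_mul_cancel_right _ _ hRunit]
    have hBeq : B = R * (1 + P) * R := by
      rw [mul_add, add_mul, mul_one, hPdef, hmid, hRR]
      abel
    obtain ⟨t, ht1, htdet⟩ := det_one_add_psd hPpsd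
    have hb' : (b : ℂ) = R.det * (t : ℂ) * R.det := by
      rw [← hbdet, hBeq, det_mul, det_mul, htdet]
    have hRRdet : R.det * R.det = (a : ℂ) := by rw [← det_mul, hRR, hadet]
    have : (b : ℂ) = (a : ℂ) * (t : ℂ) := by rw [hb', ← hRRdet]; ring
    have hbat : b = a * t := by exact_mod_cast this
    rw [hbat]
    nlinarith

theorem det_congruence_lower_bound
    (n K : ℕ) (hK : K ≤ n)
    (Θ : Matrix (Fin n) (Fin n) ℂ) (hΘ : Θ.PosSemidef)
    (c : ℝ) (hc : 0 ≤ c)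
    (hΘc : (Θ - (c : ℂ) • (1 : Matrix (Fin n) (Fin n) ℂ)).PosSemidef)
    (S : Matrix (Fin K) (Fin n) ℂ) :
    c ^ K * ((S * Sᴴ).det.re) ≤ ((S * Θ * Sᴴ).det.re) := by
  set A : Matrix (Fin K) (Fin K) ℂ := (c : ℂ) • (S * Sᴴ) with hAdef
  have hSS : (S * Sᴴ).PosSemidef := posSemidef_self_mul_conjTranspose S
  have hcC : (0 : ℂ) ≤ (c : ℂ) := by exact_mod_cast hc
  have hsm : ((c : ℂ) • (1 : Matrix (Fin n) (Fin n) ℂ)).PosSemidef := by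
    rw [smul_one_eq_diagonal]
    exact posSemidef_diagonal_iff.mpr fun i => hcC
  have hA : A.PosSemidef := by
    have h := hsm.mul_mul_conjTranspose_same S
    have heq : S * ((c : ℂ) • (1 : Matrix (Fin n) (Fin n) ℂ)) * Sᴴ = A := by
      rw [hAdef, Matrix.mul_smul, Matrix.mul_one, Matrix.smul_mul]
    rwa [heq] at h
  have hBA : (S * Θ * Sᴴ - A).PosSemidef := by
    have h := hΘc.mul_mul_conjTranspose_same S
    have heq : S * (Θ - (c : ℂ) • (1 : Matrix (Fin n) (Fin n) ℂ)) * Sᴴ = S * Θ * Sᴴ - A := by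
      rw [Matrix.mul_sub, Matrix.sub_mul, hAdef]
      congr 1
      rw [Matrix.mul_smul, Matrix.mul_one, Matrix.smul_mul]
    rwa [heq] at h
  have hmono := det_mono hA hBA
  obtain ⟨r, hr0, hrdet⟩ := psd_det_real hSS
  have hAdet : A.det = ((c ^ K * r : ℝ) : ℂ) := by
    rw [hAdef, det_smul, hrdet, Fintype.card_fin]
    push_cast
    ring
  calc c ^ K * (S * Sᴴ).det.re = A.det.re := by
        rw [hAdet, hrdet, Complex.ofReal_re, Complex.ofReal_re]
    _ ≤ (S * Θ * Sᴴ).det.re := hmono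
end
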